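/- arXiv:1404.3997 — 2 statements merged into one kernel-verified Lean document; each statement's English description precedes it below -/
import Mathlib

section
/- (Generalized cut-set bound at the second source node.) Under the memoryless action-dependent source setup, let M = g(Y^n) for any deterministic map g into a finite set. Then H(M) + H(Y^n | X^n, M) ≥ Σ_{i=1}^n H(Y_i | A_i, X_i). -/
open Finset

/-- Probability that the random variable `X` takes the value `s`, under the pmf `p`. -/
noncomputable def probOf {Ω S : Type*} [Fintype Ω] [DecidableEq S]
    (p : Ω → ℝ) (X : Ω → S) (s : S) : ℝ :=
  ∑ ω : Ω, if X ω = s then p ω else 0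

/-- Base-2 Shannon entropy of the random variable `X` under the pmf `p`. -/
noncomputable def ent {Ω S : Type*} [Fintype Ω] [Fintype S] [DecidableEq S]
    (p : Ω → ℝ) (X : Ω → S) : ℝ :=
  ∑ s : S, Real.negMulLog (probOf p X s) / Real.log 2

/-- Conditional entropy `H(X | Y)` (base 2). -/
noncomputable def condEnt {Ω S T : Type*} [Fintype Ω] [Fintype S] [Fintype T]
    [DecidableEq S] [DecidableEq T] (p : Ω → ℝ) (X : Ω → S) (Y : Ω → T) : ℝ :=
  ent p (fun ω => (X ω, Y ω)) - ent p Y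

/-- Mutual information `I(X ; Y)` (base 2). -/
noncomputable def mutInfo {Ω S T : Type*} [Fintype Ω] [Fintype S] [Fintype T]
    [DecidableEq S] [DecidableEq T] (p : Ω → ℝ) (X : Ω → S) (Y : Ω → T) : ℝ :=
  ent p X + ent p Y - ent p (fun ω => (X ω, Y ω))

/-- Joint pmf of `(X^n, Y^n)` in the memoryless action-dependent source setup:
`X^n` i.i.d. `∼ μ`, `A^n = f X^n`, and conditionally on `X^n = x^n` the coordinates of `Y^n`
are independent with `Y_i ∼ W (x_i) (f x^n i)`. -/
noncomputable def jointPmf {n : ℕ} {𝒳 𝒜 𝒴 : Type*}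
    (μ : 𝒳 → ℝ) (f : (Fin n → 𝒳) → (Fin n → 𝒜)) (W : 𝒳 → 𝒜 → 𝒴 → ℝ) :
    (Fin n → 𝒳) × (Fin n → 𝒴) → ℝ :=
  fun ω => (∏ i, μ (ω.1 i)) * ∏ i, W (ω.1 i) (f ω.1 i) (ω.2 i)

set_option linter.unusedSectionVars false

/-! ### Auxiliary lemmas -/

/-- Natural-log entropy. -/
noncomputable def nent {Ω S : Type*} [Fintype Ω] [Fintype S] [DecidableEq S]
    (p : Ω → ℝ) (X : Ω → S) : ℝ :=
  ∑ s : S, Real.negMulLog (probOf p X s)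

lemma ent_eq_nent {Ω S : Type*} [Fintype Ω] [Fintype S] [DecidableEq S]
    (p : Ω → ℝ) (X : Ω → S) : ent p X = nent p X / Real.log 2 := by
  rw [ent, nent, Finset.sum_div]

lemma sum_prod_fn {ι κ : Type*} [Fintype ι] [DecidableEq ι] [Fintype κ] (F : ι → κ → ℝ) :
    ∑ y : ι → κ, ∏ i, F i (y i) = ∏ i, ∑ k, F i k := by
  rw [← Finset.sum_prod_piFinset (univ : Finset κ) F, Fintype.piFinset_univ]

lemma negMulLog_prod {ι : Type*} [DecidableEq ι] (s : Finset ι) (q : ι → ℝ) :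
    Real.negMulLog (∏ j ∈ s, q j) = ∑ i ∈ s, (∏ j ∈ s.erase i, q j) * Real.negMulLog (q i) := by
  induction s using Finset.induction_on with
  | empty => simp
  | insert _ _ ha ih =>
    rename_i a s'
    rw [Finset.prod_insert ha, Real.negMulLog_mul, ih, Finset.sum_insert ha, Finset.mul_sum,
      Finset.erase_insert ha]
    congr 1
    refine Finset.sum_congr rfl fun i hi => ?_
    rw [Finset.erase_insert_of_ne (by rintro rfl; exact ha hi),
      Finset.prod_insert (fun h => ha (Finset.mem_of_mem_erase h))]
    ring

lemma sum_negMulLog_prod_fn {ι κ : Type*} [Fintype ι] [DecidableEq ι] [Fintype κ]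
    (w : ι → κ → ℝ) (hw : ∀ i, ∑ k, w i k = 1) :
    ∑ y : ι → κ, Real.negMulLog (∏ i, w i (y i)) = ∑ i, ∑ k, Real.negMulLog (w i k) := by
  have h1 : ∀ y : ι → κ, Real.negMulLog (∏ i, w i (y i))
      = ∑ i, (∏ j ∈ univ.erase i, w j (y j)) * Real.negMulLog (w i (y i)) :=
    fun y => negMulLog_prod univ _
  rw [Finset.sum_congr rfl fun y _ => h1 y, Finset.sum_comm]
  refine Finset.sum_congr rfl fun i _ => ?_
  set H : ι → κ → ℝ := fun j k => if j = i then Real.negMulLog (w i k) else w j k with hH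
  have h2 : ∀ y : ι → κ, (∏ j ∈ univ.erase i, w j (y j)) * Real.negMulLog (w i (y i))
      = ∏ j, H j (y j) := by
    intro y
    rw [← Finset.mul_prod_erase univ (fun j => H j (y j)) (mem_univ i)]
    have : ∏ j ∈ univ.erase i, H j (y j) = ∏ j ∈ univ.erase i, w j (y j) :=
      Finset.prod_congr rfl fun j hj => by simp [hH, (Finset.mem_erase.1 hj).1]
    rw [this]; simp [hH]; ring
  rw [Finset.sum_congr rfl fun y _ => h2 y, sum_prod_fn,
    ← Finset.mul_prod_erase univ (fun j => ∑ k, H j k) (mem_univ i)]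
  have : ∏ j ∈ univ.erase i, ∑ k, H j k = 1 := by
    refine Finset.prod_eq_one fun j hj => ?_
    simp only [hH, if_neg (Finset.mem_erase.1 hj).1]
    exact hw j
  rw [this, mul_one]
  simp [hH]

lemma sum_ite_prod_fn {ι κ : Type*} [Fintype ι] [DecidableEq ι] [Fintype κ] [DecidableEq κ]
    (w : ι → κ → ℝ) (hw : ∀ i, ∑ k, w i k = 1) (i : ι) (y₀ : κ) :
    ∑ y : ι → κ, (if y i = y₀ then ∏ j, w j (y j) else 0) = w i y₀ := by
  set H : ι → κ → ℝ := fun j k => if j = i then (if k = y₀ then w i y₀ else 0) else w j k with hH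
  have h2 : ∀ y : ι → κ, (if y i = y₀ then ∏ j, w j (y j) else 0) = ∏ j, H j (y j) := by
    intro y
    rw [← Finset.mul_prod_erase univ (fun j => H j (y j)) (mem_univ i)]
    have he : ∏ j ∈ univ.erase i, H j (y j) = ∏ j ∈ univ.erase i, w j (y j) :=
      Finset.prod_congr rfl fun j hj => by simp [hH, (Finset.mem_erase.1 hj).1]
    rw [he]
    by_cases h : y i = y₀
    · rw [if_pos h, ← Finset.mul_prod_erase univ (fun j => w j (y j)) (mem_univ i)]
      simp [hH, h]
    · simp [hH, h]
  rw [Finset.sum_congr rfl fun y _ => h2 y, sum_prod_fn,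
    ← Finset.mul_prod_erase univ (fun j => ∑ k, H j k) (mem_univ i)]
  have : ∏ j ∈ univ.erase i, ∑ k, H j k = 1 :=
    Finset.prod_eq_one fun j hj => by
      simp only [hH, if_neg (Finset.mem_erase.1 hj).1]; exact hw j
  rw [this, mul_one]
  simp [hH]

lemma gibbs_term {q u : ℝ} (hq : 0 ≤ q) (hu : 0 ≤ u) (h : 0 < q → 0 < u) :
    q * Real.log u - q * Real.log q ≤ u - q := by
  rcases eq_or_lt_of_le hq with h0 | h0
  · simp [← h0, hu]
  · have hu' := h h0
    have hlog := Real.log_le_sub_one_of_pos (div_pos hu' h0)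
    rw [Real.log_div (ne_of_gt hu') (ne_of_gt h0)] at hlog
    have := mul_le_mul_of_nonneg_left hlog (le_of_lt h0)
    have hne : q ≠ 0 := ne_of_gt h0
    calc q * Real.log u - q * Real.log q = q * (Real.log u - Real.log q) := by ring
    _ ≤ q * (u / q - 1) := this
    _ = u - q := by field_simp

lemma sum_negMulLog_pair_le {S T : Type*} [Fintype S] [Fintype T]
    (q : S → T → ℝ) (qX : S → ℝ) (qY : T → ℝ)
    (hq : ∀ s t, 0 ≤ q s t)
    (hX : ∀ s, ∑ t, q s t = qX s) (hY : ∀ t, ∑ s, q s t = qY t)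
    (hX1 : ∑ s, qX s = 1) (hY1 : ∑ t, qY t = 1) :
    ∑ s, ∑ t, Real.negMulLog (q s t)
      ≤ ∑ s, Real.negMulLog (qX s) + ∑ t, Real.negMulLog (qY t) := by
  have hqX0 : ∀ s, 0 ≤ qX s := fun s => (hX s) ▸ Finset.sum_nonneg fun t _ => hq s t
  have hqY0 : ∀ t, 0 ≤ qY t := fun t => (hY t) ▸ Finset.sum_nonneg fun s _ => hq s t
  have key : ∀ s t, q s t * Real.log (qX s) + q s t * Real.log (qY t)
      - q s t * Real.log (q s t) ≤ qX s * qY t - q s t := by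
    intro s t
    rcases eq_or_lt_of_le (hq s t) with h0 | h0
    · simp only [← h0, zero_mul, sub_zero, add_zero, sub_self]
      exact mul_nonneg (hqX0 s) (hqY0 t)
    · have hsX : 0 < qX s := lt_of_lt_of_le h0 ((hX s) ▸
        Finset.single_le_sum (fun t' _ => hq s t') (mem_univ t))
      have hsY : 0 < qY t := lt_of_lt_of_le h0 ((hY t) ▸
        Finset.single_le_sum (fun s' _ => hq s' t) (mem_univ s))
      have := gibbs_term (le_of_lt h0) (le_of_lt (mul_pos hsX hsY)) (fun _ => mul_pos hsX hsY)
      rw [Real.log_mul (ne_of_gt hsX) (ne_of_gt hsY)] at this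
      linarith [this, mul_le_mul_of_nonneg_left (le_refl (1:ℝ)) (le_of_lt h0)]
  have hsum : ∑ s, ∑ t, (q s t * Real.log (qX s) + q s t * Real.log (qY t)
      - q s t * Real.log (q s t)) ≤ 0 := by
    calc ∑ s, ∑ t, (q s t * Real.log (qX s) + q s t * Real.log (qY t)
          - q s t * Real.log (q s t))
        ≤ ∑ s, ∑ t, (qX s * qY t - q s t) :=
          Finset.sum_le_sum fun s _ => Finset.sum_le_sum fun t _ => key s t
      _ = 0 := by
          simp only [Finset.sum_sub_distrib, ← Finset.mul_sum]
          simp only [hX, hY1, mul_one, hX1]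
          norm_num
  have e1 : ∑ s, Real.negMulLog (qX s) = -∑ s, ∑ t, q s t * Real.log (qX s) := by
    rw [← Finset.sum_neg_distrib]
    refine Finset.sum_congr rfl fun s _ => ?_
    rw [← Finset.sum_mul, hX s, Real.negMulLog]
    ring
  have e2 : ∑ t, Real.negMulLog (qY t) = -∑ s, ∑ t, q s t * Real.log (qY t) := by
    rw [Finset.sum_comm, ← Finset.sum_neg_distrib]
    refine Finset.sum_congr rfl fun t _ => ?_
    rw [← Finset.sum_mul, hY t, Real.negMulLog]
    ring
  have e3 : ∑ s, ∑ t, Real.negMulLog (q s t) = -∑ s, ∑ t, q s t * Real.log (q s t) := by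
    simp [Real.negMulLog, Finset.sum_neg_distrib]
  simp only [Finset.sum_add_distrib, Finset.sum_sub_distrib] at hsum
  linarith

section ProbLemmas

variable {Ω S T : Type*} [Fintype Ω] [Fintype S] [Fintype T] [DecidableEq S] [DecidableEq T]

lemma probOf_nonneg (p : Ω → ℝ) (hp : ∀ ω, 0 ≤ p ω) (X : Ω → S) (s : S) :
    0 ≤ probOf p X s := by
  unfold probOf
  exact Finset.sum_nonneg fun ω _ => by split <;> simp [hp ω]

lemma sum_probOf (p : Ω → ℝ) (X : Ω → S) : ∑ s, probOf p X s = ∑ ω, p ω := by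
  unfold probOf
  rw [Finset.sum_comm]
  exact Finset.sum_congr rfl fun ω _ => by simp [Finset.sum_ite_eq']

lemma probOf_pair_fst (p : Ω → ℝ) (X : Ω → S) (Y : Ω → T) (s : S) :
    ∑ t, probOf p (fun ω => (X ω, Y ω)) (s, t) = probOf p X s := by
  unfold probOf
  rw [Finset.sum_comm]
  refine Finset.sum_congr rfl fun ω _ => ?_
  simp only [Prod.mk.injEq]
  by_cases h : X ω = s
  · simp [h, Finset.sum_ite_eq']
  · simp [h]

lemma probOf_pair_snd (p : Ω → ℝ) (X : Ω → S) (Y : Ω → T) (t : T) :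
    ∑ s, probOf p (fun ω => (X ω, Y ω)) (s, t) = probOf p Y t := by
  unfold probOf
  rw [Finset.sum_comm]
  refine Finset.sum_congr rfl fun ω _ => ?_
  simp only [Prod.mk.injEq]
  by_cases h : Y ω = t
  · simp [h, Finset.sum_ite_eq']
  · simp [h]

lemma nent_pair_le (p : Ω → ℝ) (hp : ∀ ω, 0 ≤ p ω) (hp1 : ∑ ω, p ω = 1)
    (X : Ω → S) (Y : Ω → T) :
    nent p (fun ω => (X ω, Y ω)) ≤ nent p X + nent p Y := by
  unfold nent
  rw [Fintype.sum_prod_type]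
  exact sum_negMulLog_pair_le (fun s t => probOf p (fun ω => (X ω, Y ω)) (s, t))
    (probOf p X) (probOf p Y)
    (fun s t => probOf_nonneg p hp _ _)
    (probOf_pair_fst p X Y) (probOf_pair_snd p X Y)
    (by rw [sum_probOf, hp1]) (by rw [sum_probOf, hp1])

lemma nent_comp_inj (p : Ω → ℝ) {e : S → T} (he : Function.Injective e) (X : Ω → S) :
    nent p (fun ω => e (X ω)) = nent p X := by
  unfold nent
  rw [← Finset.sum_subset (Finset.subset_univ ((univ : Finset S).image e))]
  · rw [Finset.sum_image (fun a _ b _ h => he h)]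
    refine Finset.sum_congr rfl fun s _ => ?_
    congr 1
    unfold probOf
    exact Finset.sum_congr rfl fun ω _ => by simp [he.eq_iff]
  · intro t _ ht
    have : probOf p (fun ω => e (X ω)) t = 0 := by
      unfold probOf
      refine Finset.sum_eq_zero fun ω _ => ?_
      rw [if_neg]
      intro h
      exact ht (Finset.mem_image.2 ⟨X ω, mem_univ _, h⟩)
    simp [this]

lemma probOf_id (p : Ω → ℝ) [DecidableEq Ω] (ω₀ : Ω) :
    probOf p (fun ω => ω) ω₀ = p ω₀ := by
  simp [probOf, Finset.sum_ite_eq']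

end ProbLemmas

section JointLemmas

variable {n : ℕ} {𝒳 𝒜 𝒴 : Type*}
    [Fintype 𝒳] [DecidableEq 𝒳] [Fintype 𝒜] [DecidableEq 𝒜] [Fintype 𝒴] [DecidableEq 𝒴]
    (μ : 𝒳 → ℝ) (f : (Fin n → 𝒳) → (Fin n → 𝒜)) (W : 𝒳 → 𝒜 → 𝒴 → ℝ)

lemma hQ1 (hW1 : ∀ x a, ∑ y, W x a y = 1) :
    ∀ x : Fin n → 𝒳, ∑ y : Fin n → 𝒴, ∏ i, W (x i) (f x i) (y i) = 1 := by
  intro x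
  rw [sum_prod_fn]
  exact Finset.prod_eq_one fun i _ => hW1 _ _

lemma probOf_fst (hW1 : ∀ x a, ∑ y, W x a y = 1) (x : Fin n → 𝒳) :
    probOf (jointPmf μ f W) (fun ω => ω.1) x = ∏ i, μ (x i) := by
  unfold probOf jointPmf
  rw [Fintype.sum_prod_type]
  have : ∀ x' : Fin n → 𝒳, (∑ y : Fin n → 𝒴,
      if x' = x then (∏ i, μ (x' i)) * ∏ i, W (x' i) (f x' i) (y i) else 0)
      = if x' = x then ∏ i, μ (x' i) else 0 := by
    intro x'
    by_cases h : x' = x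
    · simp only [if_pos h, ← Finset.mul_sum, hQ1 f W hW1 x', mul_one]
    · simp [h]
  rw [Finset.sum_congr rfl fun x' _ => this x']
  simp [Finset.sum_ite_eq']

lemma probOf_AX (hW1 : ∀ x a, ∑ y, W x a y = 1) (i : Fin n) (ax : 𝒜 × 𝒳) :
    probOf (jointPmf μ f W) (fun ω => (f ω.1 i, ω.1 i)) ax
      = ∑ x : Fin n → 𝒳, (if (f x i, x i) = ax then ∏ j, μ (x j) else 0) := by
  unfold probOf jointPmf
  rw [Fintype.sum_prod_type]
  refine Finset.sum_congr rfl fun x _ => ?_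
  by_cases h : (f x i, x i) = ax
  · simp only [if_pos h, ← Finset.mul_sum, hQ1 f W hW1 x, mul_one]
  · simp [h]

lemma probOf_YAX (hW1 : ∀ x a, ∑ y, W x a y = 1) (i : Fin n) (y₀ : 𝒴) (ax : 𝒜 × 𝒳) :
    probOf (jointPmf μ f W) (fun ω => (ω.2 i, (f ω.1 i, ω.1 i))) (y₀, ax)
      = (∑ x : Fin n → 𝒳, (if (f x i, x i) = ax then ∏ j, μ (x j) else 0))
          * W ax.2 ax.1 y₀ := by
  unfold probOf jointPmf
  rw [Fintype.sum_prod_type, Finset.sum_mul]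
  refine Finset.sum_congr rfl fun x _ => ?_
  by_cases h : (f x i, x i) = ax
  · rw [if_pos h]
    have hsum : ∑ y : Fin n → 𝒴, (if y i = y₀ then ∏ j, W (x j) (f x j) (y j) else 0)
        = W (x i) (f x i) y₀ :=
      sum_ite_prod_fn _ (fun j => hW1 _ _) i y₀
    have ha : f x i = ax.1 := by rw [← h]
    have hx : x i = ax.2 := by rw [← h]
    rw [← ha, ← hx, ← hsum, Finset.mul_sum]
    refine Finset.sum_congr rfl fun y _ => ?_
    simp only [Prod.mk.injEq, h, and_true]
    split <;> simp
  · rw [if_neg h, zero_mul]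
    refine Finset.sum_eq_zero fun y _ => ?_
    rw [if_neg]
    simp only [Prod.mk.injEq]
    tauto

end JointLemmas

/-- Generalized cut-set bound at the second source node: under the memoryless
action-dependent source setup, for `M = g (Y^n)` with `g` a deterministic map into a
finite set, `H(M) + H(Y^n | X^n, M) ≥ ∑ i, H(Y_i | A_i, X_i)`. -/
theorem stmt_4 {n : ℕ} {𝒳 𝒜 𝒴 ℳ : Type*}
    [Fintype 𝒳] [DecidableEq 𝒳] [Fintype 𝒜] [DecidableEq 𝒜] [Fintype 𝒴] [DecidableEq 𝒴]
    [Fintype ℳ] [DecidableEq ℳ]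
    (μ : 𝒳 → ℝ) (hμ0 : ∀ x, 0 ≤ μ x) (hμ1 : ∑ x, μ x = 1)
    (f : (Fin n → 𝒳) → (Fin n → 𝒜))
    (W : 𝒳 → 𝒜 → 𝒴 → ℝ) (hW0 : ∀ x a y, 0 ≤ W x a y) (hW1 : ∀ x a, ∑ y, W x a y = 1)
    (g : (Fin n → 𝒴) → ℳ) :
    ent (jointPmf μ f W) (fun ω => g ω.2)
        + condEnt (jointPmf μ f W) (fun ω => ω.2) (fun ω => (ω.1, g ω.2))
      ≥ ∑ i : Fin n,
          condEnt (jointPmf μ f W) (fun ω => ω.2 i) (fun ω => (f ω.1 i, ω.1 i)) := by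
  classical
  set p : (Fin n → 𝒳) × (Fin n → 𝒴) → ℝ := jointPmf μ f W with hpdef
  have hQ1' := hQ1 f W hW1
  have hp0 : ∀ ω, 0 ≤ p ω := fun ω =>
    mul_nonneg (Finset.prod_nonneg fun i _ => hμ0 _) (Finset.prod_nonneg fun i _ => hW0 _ _ _)
  have hP1 : ∑ x : Fin n → 𝒳, ∏ j, μ (x j) = 1 := by
    rw [sum_prod_fn]
    exact Finset.prod_eq_one fun i _ => hμ1
  have hp1 : ∑ ω, p ω = 1 := by
    rw [Fintype.sum_prod_type]
    have : ∀ x : Fin n → 𝒳, ∑ y : Fin n → 𝒴, p (x, y) = ∏ j, μ (x j) := by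
      intro x
      show ∑ y : Fin n → 𝒴, (∏ j, μ (x j)) * ∏ j, W (x j) (f x j) (y j) = _
      rw [← Finset.mul_sum, hQ1' x, mul_one]
    rw [Finset.sum_congr rfl fun x _ => this x, hP1]
  -- the big entropy "c" term
  set c : (Fin n → 𝒳) → ℝ :=
    fun x => ∑ i, ∑ y, Real.negMulLog (W (x i) (f x i) y) with hcdef
  -- Step 1: relabeling
  have hinj : nent p (fun ω => (ω.2, (ω.1, g ω.2))) = nent p (fun ω => ω) := by
    have he : Function.Injective
        (fun ω : (Fin n → 𝒳) × (Fin n → 𝒴) => (ω.2, (ω.1, g ω.2))) := by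
      intro a b h
      simp only [Prod.mk.injEq] at h
      exact Prod.ext h.2.1 h.1
    exact nent_comp_inj p he (fun ω => ω)
  -- Step 2: subadditivity
  have hsub : nent p (fun ω => (ω.1, g ω.2))
      ≤ nent p (fun ω => ω.1) + nent p (fun ω => g ω.2) :=
    nent_pair_le p hp0 hp1 (fun ω => ω.1) (fun ω => g ω.2)
  -- Step 3: entropy of the identity
  have hX : nent p (fun ω => ω.1) = ∑ x : Fin n → 𝒳, Real.negMulLog (∏ j, μ (x j)) :=
    Finset.sum_congr rfl fun x _ => by rw [probOf_fst μ f W hW1 x]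
  have hid : nent p (fun ω => ω)
      = nent p (fun ω => ω.1) + ∑ x : Fin n → 𝒳, (∏ j, μ (x j)) * c x := by
    have h1 : nent p (fun ω => ω) = ∑ ω, Real.negMulLog (p ω) :=
      Finset.sum_congr rfl fun ω _ => by rw [probOf_id]
    rw [h1, Fintype.sum_prod_type, hX]
    rw [← Finset.sum_add_distrib]
    refine Finset.sum_congr rfl fun x _ => ?_
    have h2 : ∀ y : Fin n → 𝒴, Real.negMulLog (p (x, y))
        = (∏ j, W (x j) (f x j) (y j)) * Real.negMulLog (∏ j, μ (x j))
          + (∏ j, μ (x j)) * Real.negMulLog (∏ j, W (x j) (f x j) (y j)) := by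
      intro y
      show Real.negMulLog ((∏ j, μ (x j)) * ∏ j, W (x j) (f x j) (y j)) = _
      rw [Real.negMulLog_mul]
    rw [Finset.sum_congr rfl fun y _ => h2 y, Finset.sum_add_distrib, ← Finset.sum_mul,
      hQ1' x, one_mul, ← Finset.mul_sum,
      sum_negMulLog_prod_fn (fun i y => W (x i) (f x i) y) (fun i => hW1 _ _)]
  -- Step 4: each conditional-entropy summand
  have hC : ∀ i : Fin n,
      nent p (fun ω => (ω.2 i, (f ω.1 i, ω.1 i))) - nent p (fun ω => (f ω.1 i, ω.1 i))
      = ∑ ax : 𝒜 × 𝒳, (∑ x : Fin n → 𝒳, if (f x i, x i) = ax then ∏ j, μ (x j) else 0)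
          * ∑ y, Real.negMulLog (W ax.2 ax.1 y) := by
    intro i
    set r : 𝒜 × 𝒳 → ℝ :=
      fun ax => ∑ x : Fin n → 𝒳, if (f x i, x i) = ax then ∏ j, μ (x j) else 0 with hr
    have hD : nent p (fun ω => (f ω.1 i, ω.1 i)) = ∑ ax, Real.negMulLog (r ax) :=
      Finset.sum_congr rfl fun ax _ => by rw [probOf_AX μ f W hW1 i ax]
    have hCnum : nent p (fun ω => (ω.2 i, (f ω.1 i, ω.1 i)))
        = ∑ y₀ : 𝒴, ∑ ax : 𝒜 × 𝒳, Real.negMulLog (r ax * W ax.2 ax.1 y₀) := by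
      rw [nent, Fintype.sum_prod_type]
      exact Finset.sum_congr rfl fun y₀ _ => Finset.sum_congr rfl fun ax _ => by
        rw [probOf_YAX μ f W hW1 i y₀ ax]
    rw [hCnum, hD, Finset.sum_comm]
    have h3 : ∀ ax : 𝒜 × 𝒳, ∑ y₀, Real.negMulLog (r ax * W ax.2 ax.1 y₀)
        = Real.negMulLog (r ax) + r ax * ∑ y, Real.negMulLog (W ax.2 ax.1 y) := by
      intro ax
      simp only [Real.negMulLog_mul]
      rw [Finset.sum_add_distrib, ← Finset.sum_mul, hW1 ax.2 ax.1, one_mul, ← Finset.mul_sum]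
    rw [Finset.sum_congr rfl fun ax _ => h3 ax, Finset.sum_add_distrib]
    ring
  -- Step 5: summing the conditional entropies
  have hS5 : ∑ i : Fin n, ∑ ax : 𝒜 × 𝒳,
      (∑ x : Fin n → 𝒳, if (f x i, x i) = ax then ∏ j, μ (x j) else 0)
        * ∑ y, Real.negMulLog (W ax.2 ax.1 y)
      = ∑ x : Fin n → 𝒳, (∏ j, μ (x j)) * c x := by
    have h4 : ∀ i : Fin n, ∑ ax : 𝒜 × 𝒳,
        (∑ x : Fin n → 𝒳, if (f x i, x i) = ax then ∏ j, μ (x j) else 0)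
          * ∑ y, Real.negMulLog (W ax.2 ax.1 y)
        = ∑ x : Fin n → 𝒳, (∏ j, μ (x j)) * ∑ y, Real.negMulLog (W (x i) (f x i) y) := by
      intro i
      have h5 : ∀ ax : 𝒜 × 𝒳,
          (∑ x : Fin n → 𝒳, if (f x i, x i) = ax then ∏ j, μ (x j) else 0)
            * ∑ y, Real.negMulLog (W ax.2 ax.1 y)
          = ∑ x : Fin n → 𝒳, if (f x i, x i) = ax
              then (∏ j, μ (x j)) * ∑ y, Real.negMulLog (W ax.2 ax.1 y) else 0 := by
        intro ax
        rw [Finset.sum_mul]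
        exact Finset.sum_congr rfl fun x _ => by split <;> simp
      rw [Finset.sum_congr rfl fun ax _ => h5 ax, Finset.sum_comm]
      refine Finset.sum_congr rfl fun x _ => ?_
      rw [Finset.sum_ite_eq (univ : Finset (𝒜 × 𝒳)) (f x i, x i)
        (fun ax => (∏ j, μ (x j)) * ∑ y, Real.negMulLog (W ax.2 ax.1 y))]
      simp
    rw [Finset.sum_congr rfl fun i _ => h4 i, Finset.sum_comm]
    exact Finset.sum_congr rfl fun x _ => by rw [hcdef, ← Finset.mul_sum]
  -- Put the natural-log版 together
  have key : ∑ i : Fin n,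
      (nent p (fun ω => (ω.2 i, (f ω.1 i, ω.1 i))) - nent p (fun ω => (f ω.1 i, ω.1 i)))
      ≤ nent p (fun ω => g ω.2)
        + (nent p (fun ω => (ω.2, (ω.1, g ω.2))) - nent p (fun ω => (ω.1, g ω.2))) := by
    rw [Finset.sum_congr rfl fun i _ => hC i, hS5, hinj, hid]
    linarith
  -- convert to base 2
  have hL : 0 < Real.log 2 := Real.log_pos one_lt_two
  rw [ge_iff_le]
  have lhs_eq : ∑ i : Fin n,
      condEnt p (fun ω => ω.2 i) (fun ω => (f ω.1 i, ω.1 i))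
      = (∑ i : Fin n, (nent p (fun ω => (ω.2 i, (f ω.1 i, ω.1 i)))
          - nent p (fun ω => (f ω.1 i, ω.1 i)))) / Real.log 2 := by
    rw [Finset.sum_div]
    exact Finset.sum_congr rfl fun i _ => by
      rw [condEnt, ent_eq_nent, ent_eq_nent, sub_div]
  have rhs_eq : ent p (fun ω => g ω.2)
        + condEnt p (fun ω => ω.2) (fun ω => (ω.1, g ω.2))
      = (nent p (fun ω => g ω.2)
        + (nent p (fun ω => (ω.2, (ω.1, g ω.2))) - nent p (fun ω => (ω.1, g ω.2))))
          / Real.log 2 := by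
    rw [condEnt, ent_eq_nent, ent_eq_nent, ent_eq_nent, add_div, sub_div]
  rw [lhs_eq, rhs_eq]
  exact div_le_div_of_nonneg_right key hL.le
end

section
/- (Generalized cut-set bound separating both source nodes from a terminal.) Under the memoryless action-dependent source setup, let M = g(X^n, Y^n) for any deterministic map g into a finite set. Then H(M) + H(X^n, Y^n | M) ≥ Σ_{i=1}^n [ I(X_i ; A_i) + H(X_i, Y_i | A_i) ]. -/
open Finset

lemma sum_prod_fn_s5 {n : ℕ} {S : Type*} [Fintype S] (F : Fin n → S → ℝ) :
    ∑ w : Fin n → S, ∏ i, F i (w i) = ∏ i, ∑ s, F i s := by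
  rw [Finset.prod_univ_sum]
  rw [Fintype.piFinset_univ]

/-- Sum over functions with an indicator pinning one coordinate. -/
lemma sum_ite_coord {n : ℕ} {S : Type*} [Fintype S] [DecidableEq S]
    (F : Fin n → S → ℝ) (i : Fin n) (s0 : S) (h1 : ∀ j, ∑ s, F j s = 1) :
    ∑ w : Fin n → S, (if w i = s0 then ∏ j, F j (w j) else 0) = F i s0 := by
  have key : ∀ w : Fin n → S, (if w i = s0 then ∏ j, F j (w j) else 0)
      = ∏ j, (fun j s => if j = i then (if s = s0 then F j s else 0) else F j s) j (w j) := by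
    intro w
    by_cases h : w i = s0
    · simp only [h, if_true]
      refine Finset.prod_congr rfl fun j _ => ?_
      by_cases hj : j = i
      · subst hj; simp [h]
      · simp [hj]
    · simp only [h, if_false]
      refine (Finset.prod_eq_zero (Finset.mem_univ i) ?_).symm
      simp [h]
  rw [Finset.sum_congr rfl fun w _ => key w,
    sum_prod_fn_s5 (fun j s => if j = i then (if s = s0 then F j s else 0) else F j s)]
  have : ∀ j : Fin n, (∑ s, (fun j s => if j = i then (if s = s0 then F j s else 0) else F j s) j s)
      = if j = i then F i s0 else 1 := by
    intro j
    by_cases hj : j = i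
    · subst hj; simp [Finset.sum_ite_eq' univ s0 (F j)]
    · simp [hj, h1 j]
  rw [Finset.prod_congr rfl fun j _ => this j]
  simp

lemma nml_prod {ι : Type*} [DecidableEq ι] (s : Finset ι) (t : ι → ℝ) :
    Real.negMulLog (∏ j ∈ s, t j) = ∑ j ∈ s, (∏ k ∈ s.erase j, t k) * Real.negMulLog (t j) := by
  induction s using Finset.induction_on with
  | empty => simp
  | insert _ _ ha ih =>
    rename_i a s
    rw [Finset.prod_insert ha, Real.negMulLog_mul, Finset.sum_insert ha, ih,
      Finset.mul_sum, Finset.erase_insert ha]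
    congr 1
    refine Finset.sum_congr rfl fun j hj => ?_
    rw [Finset.erase_insert_of_ne]
    · rw [Finset.prod_insert (fun h => ha (Finset.mem_of_mem_erase h))]
      ring
    · rintro rfl; exact ha hj

lemma sum_nml_prod {n : ℕ} {S : Type*} [Fintype S] (t : Fin n → S → ℝ)
    (h1 : ∀ i, ∑ s, t i s = 1) :
    ∑ w : Fin n → S, Real.negMulLog (∏ i, t i (w i)) = ∑ i, ∑ s, Real.negMulLog (t i s) := by
  have : ∀ w : Fin n → S, Real.negMulLog (∏ i, t i (w i))
      = ∑ i, (∏ k ∈ univ.erase i, t k (w k)) * Real.negMulLog (t i (w i)) :=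
    fun w => nml_prod univ (fun j => t j (w j))
  rw [Finset.sum_congr rfl fun w _ => this w, Finset.sum_comm]
  refine Finset.sum_congr rfl fun i _ => ?_
  have key : ∀ w : Fin n → S, (∏ k ∈ univ.erase i, t k (w k)) * Real.negMulLog (t i (w i))
      = ∏ j, (fun j s => if j = i then Real.negMulLog (t i s) else t j s) j (w j) := by
    intro w
    rw [← Finset.prod_erase_mul univ _ (Finset.mem_univ i)]
    simp only [if_pos rfl]
    congr 1
    refine Finset.prod_congr rfl fun j hj => ?_
    rw [if_neg (Finset.ne_of_mem_erase hj)]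
  rw [Finset.sum_congr rfl fun w _ => key w,
    sum_prod_fn_s5 (fun j s => if j = i then Real.negMulLog (t i s) else t j s)]
  have : ∀ j : Fin n, (∑ s, (fun j s => if j = i then Real.negMulLog (t i s) else t j s) j s)
      = if j = i then ∑ s, Real.negMulLog (t i s) else 1 := by
    intro j
    by_cases hj : j = i
    · simp [hj]
    · simp [hj, h1 j]
  rw [Finset.prod_congr rfl fun j _ => this j]
  simp

noncomputable def hWAux {𝒳 𝒜 𝒴 : Type*} [Fintype 𝒴] (W : 𝒳 → 𝒜 → 𝒴 → ℝ) (x : 𝒳) (a : 𝒜) : ℝ :=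
  ∑ y, Real.negMulLog (W x a y)

noncomputable def qAux {n : ℕ} {𝒳 𝒜 : Type*} [Fintype 𝒳] [DecidableEq 𝒳] [DecidableEq 𝒜]
    (μ : 𝒳 → ℝ) (f : (Fin n → 𝒳) → (Fin n → 𝒜)) (i : Fin n) (x : 𝒳) (a : 𝒜) : ℝ :=
  ∑ v : Fin n → 𝒳, if (v i, f v i) = (x, a) then ∏ j, μ (v j) else 0

lemma ent_eq {Ω S : Type*} [Fintype Ω] [Fintype S] [DecidableEq S] (p : Ω → ℝ) (X : Ω → S) :
    ent p X = (∑ s, Real.negMulLog (probOf p X s)) / Real.log 2 := by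
  rw [ent, Finset.sum_div]

/-- Generalized cut-set bound separating both source nodes from a terminal: under the
memoryless action-dependent source setup, for `M = g (X^n, Y^n)` with `g` a deterministic
map into a finite set,
`H(M) + H(X^n, Y^n | M) ≥ ∑ i, [ I(X_i ; A_i) + H(X_i, Y_i | A_i) ]`. -/
theorem stmt_5 {n : ℕ} {𝒳 𝒜 𝒴 ℳ : Type*}
    [Fintype 𝒳] [DecidableEq 𝒳] [Fintype 𝒜] [DecidableEq 𝒜] [Fintype 𝒴] [DecidableEq 𝒴]
    [Fintype ℳ] [DecidableEq ℳ]
    (μ : 𝒳 → ℝ) (hμ0 : ∀ x, 0 ≤ μ x) (hμ1 : ∑ x, μ x = 1)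
    (f : (Fin n → 𝒳) → (Fin n → 𝒜))
    (W : 𝒳 → 𝒜 → 𝒴 → ℝ) (hW0 : ∀ x a y, 0 ≤ W x a y) (hW1 : ∀ x a, ∑ y, W x a y = 1)
    (g : (Fin n → 𝒳) × (Fin n → 𝒴) → ℳ) :
    ent (jointPmf μ f W) (fun ω => g ω)
        + condEnt (jointPmf μ f W) (fun ω => (ω.1, ω.2)) (fun ω => g ω)
      ≥ ∑ i : Fin n,
          (mutInfo (jointPmf μ f W) (fun ω => ω.1 i) (fun ω => f ω.1 i)
            + condEnt (jointPmf μ f W) (fun ω => (ω.1 i, ω.2 i)) (fun ω => f ω.1 i))  := by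
  classical
  set P := jointPmf μ f W with hP
  set L := Real.log 2 with hL
  have hWsum : ∀ v : Fin n → 𝒳, ∑ w : Fin n → 𝒴, ∏ j, W (v j) (f v j) (w j) = 1 := by
    intro v
    rw [sum_prod_fn_s5 (fun j y => W (v j) (f v j) y)]
    simp [hW1]
  have hprobg : ∀ (s : (Fin n → 𝒳) × (Fin n → 𝒴)) (m : ℳ),
      probOf P (fun ω => ((ω.1, ω.2), g ω)) (s, m) = if g s = m then P s else 0 := by
    intro s m
    unfold probOf
    have key : ∀ ω : (Fin n → 𝒳) × (Fin n → 𝒴),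
        (if ((ω.1, ω.2), g ω) = (s, m) then P ω else 0)
        = if ω = s then (if g ω = m then P ω else 0) else 0 := by
      intro ω
      by_cases h : ω = s
      · subst h; simp
      · rw [if_neg h, if_neg]
        simp only [Prod.mk.eta, Prod.mk.injEq, not_and]
        intro h'; exact absurd h' h
    rw [Finset.sum_congr rfl fun ω _ => key ω, Finset.sum_ite_eq' univ s]
    simp
  have h1 : ent P (fun ω => ((ω.1, ω.2), g ω))
      = (∑ ω : (Fin n → 𝒳) × (Fin n → 𝒴), Real.negMulLog (P ω)) / L := by
    rw [ent_eq]
    congr 1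
    rw [Fintype.sum_prod_type]
    refine Finset.sum_congr rfl fun s _ => ?_
    rw [Finset.sum_congr rfl fun m _ => by rw [hprobg s m]]
    simp [apply_ite Real.negMulLog]
  have h2 : ∑ ω : (Fin n → 𝒳) × (Fin n → 𝒴), Real.negMulLog (P ω)
      = (∑ _i : Fin n, ∑ x, Real.negMulLog (μ x))
        + ∑ i : Fin n, ∑ v : Fin n → 𝒳, (∏ j, μ (v j)) * hWAux W (v i) (f v i) := by
    rw [Fintype.sum_prod_type]
    have step : ∀ v : Fin n → 𝒳,
        ∑ w : Fin n → 𝒴, Real.negMulLog (P (v, w))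
        = Real.negMulLog (∏ j, μ (v j))
          + (∏ j, μ (v j)) * ∑ i : Fin n, hWAux W (v i) (f v i) := by
      intro v
      have hw : ∀ w : Fin n → 𝒴, Real.negMulLog (P (v, w))
          = (∏ j, W (v j) (f v j) (w j)) * Real.negMulLog (∏ j, μ (v j))
            + (∏ j, μ (v j)) * Real.negMulLog (∏ j, W (v j) (f v j) (w j)) := by
        intro w
        exact Real.negMulLog_mul (∏ j, μ (v j)) (∏ j, W (v j) (f v j) (w j))
      rw [Finset.sum_congr rfl fun w _ => hw w, Finset.sum_add_distrib, ← Finset.sum_mul,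
        hWsum v, one_mul, ← Finset.mul_sum,
        sum_nml_prod (fun j y => W (v j) (f v j) y) (fun j => hW1 _ _)]
      simp [hWAux]
    rw [Finset.sum_congr rfl fun v _ => step v, Finset.sum_add_distrib,
      sum_nml_prod (fun _ x => μ x) (fun _ => hμ1)]
    congr 1
    simp_rw [Finset.mul_sum]
    rw [Finset.sum_comm]
  have hXi : ∀ (i : Fin n) (x : 𝒳), probOf P (fun ω => ω.1 i) x = μ x := by
    intro i x
    unfold probOf
    rw [Fintype.sum_prod_type]
    have step : ∀ v : Fin n → 𝒳,
        (∑ w : Fin n → 𝒴, if v i = x then P (v, w) else 0)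
        = if v i = x then ∏ j, μ (v j) else 0 := by
      intro v
      by_cases h : v i = x
      · simp only [h, if_true, hP, jointPmf, ← Finset.mul_sum, hWsum v, mul_one]
      · simp [h]
    rw [Finset.sum_congr rfl fun v _ => step v]
    exact sum_ite_coord (fun _ => μ) i x (fun _ => hμ1)
  have hXAi : ∀ (i : Fin n) (x : 𝒳) (a : 𝒜),
      probOf P (fun ω => (ω.1 i, f ω.1 i)) (x, a) = qAux μ f i x a := by
    intro i x a
    unfold probOf qAux
    rw [Fintype.sum_prod_type]
    refine Finset.sum_congr rfl fun v _ => ?_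
    by_cases h : (v i, f v i) = (x, a)
    · simp only [h, if_true, hP, jointPmf, ← Finset.mul_sum, hWsum v, mul_one]
    · simp [h]
  have hXYAi : ∀ (i : Fin n) (x : 𝒳) (y : 𝒴) (a : 𝒜),
      probOf P (fun ω => ((ω.1 i, ω.2 i), f ω.1 i)) ((x, y), a)
      = qAux μ f i x a * W x a y := by
    intro i x y a
    unfold probOf qAux
    rw [Fintype.sum_prod_type]
    have step : ∀ v : Fin n → 𝒳,
        (∑ w : Fin n → 𝒴, if ((v i, w i), f v i) = ((x, y), a) then P (v, w) else 0)
        = (if (v i, f v i) = (x, a) then ∏ j, μ (v j) else 0) * W x a y := by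
      intro v
      by_cases h : (v i, f v i) = (x, a)
      · have hx : v i = x := ((Prod.mk.injEq _ _ _ _).mp h).1
        have ha : f v i = a := ((Prod.mk.injEq _ _ _ _).mp h).2
        rw [if_pos h]
        have cond : ∀ w : Fin n → 𝒴,
            (if ((v i, w i), f v i) = ((x, y), a) then P (v, w) else 0)
            = (∏ j, μ (v j)) * (if w i = y then ∏ j, W (v j) (f v j) (w j) else 0) := by
          intro w
          by_cases hw : w i = y
          · simp [hP, jointPmf, hx, ha, hw]
          · simp [hP, jointPmf, hx, ha, hw]
        rw [Finset.sum_congr rfl fun w _ => cond w, ← Finset.mul_sum,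
          sum_ite_coord (fun j z => W (v j) (f v j) z) i y (fun j => hW1 _ _), hx, ha]
      · rw [if_neg h, zero_mul]
        refine Finset.sum_eq_zero fun w _ => ?_
        rw [if_neg]
        simp only [Prod.mk.injEq, not_and]
        intro hx ha
        exact h (by rw [hx.1, ha])
    rw [Finset.sum_congr rfl fun v _ => step v, ← Finset.sum_mul]
  have hEntX : ∀ i : Fin n, ent P (fun ω => ω.1 i) = (∑ x, Real.negMulLog (μ x)) / L := by
    intro i
    rw [ent_eq]
    congr 1
    exact Finset.sum_congr rfl fun x _ => by rw [hXi i x]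
  have hEntXA : ∀ i : Fin n, ent P (fun ω => (ω.1 i, f ω.1 i))
      = (∑ x, ∑ a, Real.negMulLog (qAux μ f i x a)) / L := by
    intro i
    rw [ent_eq]
    congr 1
    rw [Fintype.sum_prod_type]
    exact Finset.sum_congr rfl fun x _ => Finset.sum_congr rfl fun a _ => by rw [hXAi i x a]
  have hEntXYA : ∀ i : Fin n, ent P (fun ω => ((ω.1 i, ω.2 i), f ω.1 i))
      = ((∑ x, ∑ a, Real.negMulLog (qAux μ f i x a))
          + ∑ x, ∑ a, qAux μ f i x a * hWAux W x a) / L := by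
    intro i
    rw [ent_eq]
    congr 1
    rw [Fintype.sum_prod_type]
    calc (∑ z : 𝒳 × 𝒴, ∑ a : 𝒜,
            Real.negMulLog (probOf P (fun ω => ((ω.1 i, ω.2 i), f ω.1 i)) (z, a)))
        = ∑ x : 𝒳, ∑ y : 𝒴, ∑ a : 𝒜,
            Real.negMulLog (probOf P (fun ω => ((ω.1 i, ω.2 i), f ω.1 i)) ((x, y), a)) := by
          rw [Fintype.sum_prod_type]
      _ = ∑ x : 𝒳, ∑ a : 𝒜, ∑ y : 𝒴,
            Real.negMulLog (qAux μ f i x a * W x a y) := by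
          refine Finset.sum_congr rfl fun x _ => ?_
          rw [Finset.sum_comm]
          exact Finset.sum_congr rfl fun a _ => Finset.sum_congr rfl fun y _ => by
            rw [hXYAi i x y a]
      _ = ∑ x : 𝒳, ∑ a : 𝒜,
            (Real.negMulLog (qAux μ f i x a) + qAux μ f i x a * hWAux W x a) := by
          refine Finset.sum_congr rfl fun x _ => Finset.sum_congr rfl fun a _ => ?_
          have : ∀ y : 𝒴, Real.negMulLog (qAux μ f i x a * W x a y)
              = W x a y * Real.negMulLog (qAux μ f i x a)
                + qAux μ f i x a * Real.negMulLog (W x a y) :=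
            fun y => Real.negMulLog_mul _ _
          rw [Finset.sum_congr rfl fun y _ => this y, Finset.sum_add_distrib,
            ← Finset.sum_mul, hW1 x a, one_mul, ← Finset.mul_sum, hWAux]
      _ = (∑ x, ∑ a, Real.negMulLog (qAux μ f i x a))
            + ∑ x, ∑ a, qAux μ f i x a * hWAux W x a := by
          rw [← Finset.sum_add_distrib]
          exact Finset.sum_congr rfl fun x _ => by rw [Finset.sum_add_distrib]
  have hQH : ∀ i : Fin n, ∑ x, ∑ a, qAux μ f i x a * hWAux W x a
      = ∑ v : Fin n → 𝒳, (∏ j, μ (v j)) * hWAux W (v i) (f v i) := by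
    intro i
    have expandq : ∀ (x : 𝒳) (a : 𝒜), qAux μ f i x a * hWAux W x a
        = ∑ v : Fin n → 𝒳,
            (if (v i, f v i) = (x, a) then (∏ j, μ (v j)) * hWAux W x a else 0) := by
      intro x a
      rw [qAux, Finset.sum_mul]
      refine Finset.sum_congr rfl fun v _ => ?_
      by_cases h : (v i, f v i) = (x, a) <;> simp [h]
    calc ∑ x, ∑ a, qAux μ f i x a * hWAux W x a
        = ∑ x, ∑ a, ∑ v : Fin n → 𝒳,
            (if (v i, f v i) = (x, a) then (∏ j, μ (v j)) * hWAux W x a else 0) := by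
          exact Finset.sum_congr rfl fun x _ => Finset.sum_congr rfl fun a _ => expandq x a
      _ = ∑ x, ∑ v : Fin n → 𝒳, ∑ a,
            (if (v i, f v i) = (x, a) then (∏ j, μ (v j)) * hWAux W x a else 0) := by
          exact Finset.sum_congr rfl fun x _ => Finset.sum_comm
      _ = ∑ v : Fin n → 𝒳, ∑ x, ∑ a,
            (if (v i, f v i) = (x, a) then (∏ j, μ (v j)) * hWAux W x a else 0) :=
          Finset.sum_comm
      _ = ∑ v : Fin n → 𝒳, (∏ j, μ (v j)) * hWAux W (v i) (f v i) := by
          refine Finset.sum_congr rfl fun v _ => ?_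
          have hsum : ∀ x : 𝒳,
              (∑ a, if (v i, f v i) = (x, a) then (∏ j, μ (v j)) * hWAux W x a else 0)
              = if v i = x then (∏ j, μ (v j)) * hWAux W x (f v i) else 0 := by
            intro x
            by_cases hx : v i = x
            · simp [Prod.ext_iff, hx, Finset.sum_ite_eq]
            · simp [Prod.ext_iff, hx]
          rw [Finset.sum_congr rfl fun x _ => hsum x,
            Finset.sum_ite_eq univ (v i) (fun x => (∏ j, μ (v j)) * hWAux W x (f v i))]
          simp
  have expand : ∀ i : Fin n,
      mutInfo P (fun ω => ω.1 i) (fun ω => f ω.1 i)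
        + condEnt P (fun ω => (ω.1 i, ω.2 i)) (fun ω => f ω.1 i)
      = ((∑ x, Real.negMulLog (μ x))
          + ∑ v : Fin n → 𝒳, (∏ j, μ (v j)) * hWAux W (v i) (f v i)) / L := by
    intro i
    simp only [mutInfo, condEnt]
    rw [hEntX i, hEntXA i, hEntXYA i, hQH i]
    ring
  have lhs_eq : ent P (fun ω => g ω) + condEnt P (fun ω => (ω.1, ω.2)) (fun ω => g ω)
      = ((∑ _i : Fin n, ∑ x, Real.negMulLog (μ x))
          + ∑ i : Fin n, ∑ v : Fin n → 𝒳, (∏ j, μ (v j)) * hWAux W (v i) (f v i)) / L := by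
    simp only [condEnt]
    rw [h1, h2]
    ring
  rw [ge_iff_le, lhs_eq, Finset.sum_congr rfl fun i _ => expand i]
  apply le_of_eq
  rw [← Finset.sum_div, Finset.sum_add_distrib]
end
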